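/- Let T be an imprecise terrain and let R1,...,Rk be realizations with designated nodes q1,...,qk. Let R̄ be the watershed-overlay of WS(R1,q1),...,WS(Rk,qk), i.e., the realization in which every node v has elevation min over all i with v ∈ WS(Ri,qi) of elev(Ri,v), and elevation high(v) if v is in none of these watersheds. Then for every i, WS(Ri,qi) ⊆ WS(R̄, Q), where Q = {q1,...,qk}. -/

import Mathlib

open scoped Classical
open Set

/-- An imprecise terrain: a finite geometric graph with nodes in the plane,
each node carrying an elevation interval `[low v, high v]`. -/
structure ImpTerrain (V : Type) [Fintype V] [DecidableEq V] where
  pos : V → ℝ × ℝ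
  posInj : Function.Injective pos
  adj : V → V → Prop
  adj_symm : ∀ u v, adj u v → adj v u
  adj_irrefl : ∀ v, ¬ adj v v
  low : V → ℝ
  high : V → ℝ

namespace ImpTerrain

variable {V : Type} [Fintype V] [DecidableEq V]

/-- A realization assigns to each node an elevation within its interval. -/
def IsRealization (T : ImpTerrain V) (R : V → ℝ) : Prop :=
  ∀ v, T.low v ≤ R v ∧ R v ≤ T.high v

/-- Horizontal (plane) distance between two nodes. -/
noncomputable def hdist (T : ImpTerrain V) (u v : V) : ℝ := dist (T.pos u) (T.pos v)

/-- Slope (steepness of descent) of the edge from `p` to `q` in realization `R`. -/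
noncomputable def slope (T : ImpTerrain V) (R : V → ℝ) (p q : V) : ℝ :=
  (R p - R q) / T.hdist p q

/-- `q` is a steepest-descent neighbor of `p` in `R`. -/
def SDN (T : ImpTerrain V) (R : V → ℝ) (p q : V) : Prop :=
  T.adj p q ∧ 0 ≤ T.slope R p q ∧ ∀ r, T.adj p r → T.slope R p r ≤ T.slope R p q

/-- The neighborhood of a set of nodes. -/
def Nbhd (T : ImpTerrain V) (P : Set V) : Set V :=
  {s | s ∉ P ∧ ∃ t ∈ P, T.adj s t}

/-- `u` and `v` are connected by a path staying inside `P`. -/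
def ConnIn (T : ImpTerrain V) (P : Set V) (u v : V) : Prop :=
  Relation.ReflTransGen (fun a b => T.adj a b ∧ a ∈ P ∧ b ∈ P) u v

/-- `P` is a local minimum in realization `R`: nonempty, connected, all nodes at
the same elevation, strictly below its neighborhood. -/
def LocalMin (T : ImpTerrain V) (R : V → ℝ) (P : Set V) : Prop :=
  P.Nonempty ∧ (∀ u ∈ P, ∀ v ∈ P, T.ConnIn P u v) ∧
    (∀ u ∈ P, ∀ v ∈ P, R u = R v) ∧ (∀ u ∈ P, ∀ t ∈ T.Nbhd P, R u < R t)

def InLocalMin (T : ImpTerrain V) (R : V → ℝ) (p : V) : Prop :=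
  ∃ P, T.LocalMin R P ∧ p ∈ P

/-- One step of discrete water flow. -/
def FlowStep (T : ImpTerrain V) (R : V → ℝ) (p q : V) : Prop :=
  (∃ P, T.LocalMin R P ∧ p ∈ P ∧ q ∈ P ∧ T.adj p q) ∨
    (¬ T.InLocalMin R p ∧ T.SDN R p q)

/-- `p ⇝_R q` : water from `p` reaches `q` in realization `R`. -/
def FlowsTo (T : ImpTerrain V) (R : V → ℝ) : V → V → Prop :=
  Relation.ReflTransGen (T.FlowStep R)

/-- The (discrete) watershed of a set of nodes `Q` in realization `R`. -/
def WS (T : ImpTerrain V) (R : V → ℝ) (Q : Set V) : Set V :=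
  {p | ∃ q ∈ Q, T.FlowsTo R p q}

/-- The potential watershed of `Q`. -/
def PoWS (T : ImpTerrain V) (Q : Set V) : Set V :=
  {p | ∃ R, T.IsRealization R ∧ p ∈ T.WS R Q}

/-- A flow path: a simple path following steepest-descent edges that ends in,
and visits all nodes of, a local minimum. -/
def IsFlowPath (T : ImpTerrain V) (R : V → ℝ) (L : List V) : Prop :=
  L.Nodup ∧ L.Chain' (fun p q => T.SDN R p q) ∧
    ∃ P, T.LocalMin R P ∧ (∀ v ∈ P, v ∈ L) ∧ ∃ hne : L ≠ [], L.getLast hne ∈ P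

/-- The `Q`-avoiding potential watershed of `S`: nodes having, in some
realization, a flow path to a node of `S` whose portion up to that node
avoids `Q`. -/
def AvWS (T : ImpTerrain V) (Q S : Set V) : Set V :=
  {p | ∃ R, T.IsRealization R ∧ ∃ L, T.IsFlowPath R L ∧ ∃ s ∈ S,
    ∃ i j : Fin L.length, (i : ℕ) ≤ (j : ℕ) ∧ L.get i = p ∧ L.get j = s ∧
      ∀ k : Fin L.length, (i : ℕ) ≤ (k : ℕ) → (k : ℕ) ≤ (j : ℕ) → L.get k ∉ Q}

/-- The persistent watershed of `Q`. -/
def PsWS (T : ImpTerrain V) (Q : Set V) : Set V :=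
  (T.AvWS Q (T.PoWS Q)ᶜ)ᶜ

/-- The core watershed of `Q`: nodes from which every induced flow path leads
to a node of `Q`. -/
def CoWS (T : ImpTerrain V) (Q : Set V) : Set V :=
  {p | ∀ R, T.IsRealization R → ∀ L, T.IsFlowPath R L →
    ∀ i : Fin L.length, L.get i = p →
      ∃ q ∈ Q, ∃ j : Fin L.length, (i : ℕ) ≤ (j : ℕ) ∧ L.get j = q}

/-- Union of all node sets disjoint from `Q` that form a local minimum in some
realization. -/
def Vmin (T : ImpTerrain V) (Q : Set V) : Set V :=
  ⋃₀ {r | r ∩ Q = ∅ ∧ ∃ R, T.IsRealization R ∧ T.LocalMin R r}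

/-- `S` contains a local minimum in every realization. -/
def AlwaysMin (T : ImpTerrain V) (S : Set V) : Prop :=
  ∀ R, T.IsRealization R → ∃ P, T.LocalMin R P ∧ P ⊆ S

/-- An imprecise minimum: a minimal set containing a local minimum in every
realization. -/
def ImpreciseMin (T : ImpTerrain V) (S : Set V) : Prop :=
  T.AlwaysMin S ∧ ∀ S', S' ⊂ S → ¬ T.AlwaysMin S'

/-- A terrain is regular if every local minimum of the lowermost realization is
an imprecise minimum. -/
def Regular (T : ImpTerrain V) : Prop :=
  ∀ P, T.LocalMin T.low P → T.ImpreciseMin P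

/-- A proxy of `S`: a node of `S` from which water can never reach a node
outside `S` in any realization. -/
def IsProxy (T : ImpTerrain V) (S : Set V) (p : V) : Prop :=
  p ∈ S ∧ ∀ R, T.IsRealization R → ∀ q, q ∉ S → ¬ T.FlowsTo R p q

/-- `R'` is an `ε`-perturbation of `R`. -/
def Perturb (ε : ℝ) (R R' : V → ℝ) : Prop := ∀ v, |R' v - R v| ≤ ε

/-- `S` together with all `ε`-perturbations of its members (`S^ε`). -/
def Enlarge (S : Set (V → ℝ)) (ε : ℝ) : Set (V → ℝ) :=
  S ∪ {R' | ∃ R ∈ S, Perturb ε R R'}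

/-- `Π(S)` : flow paths induced by realizations in `S`. -/
def FlowPathsOf (T : ImpTerrain V) (S : Set (V → ℝ)) : Set (List V) :=
  {L | ∃ R ∈ S, T.IsFlowPath R L}

/-- A flow path is stable with respect to `S`. -/
def StableWrt (T : ImpTerrain V) (S : Set (V → ℝ)) (L : List V) : Prop :=
  ∃ ε > (0 : ℝ), ∃ R ∈ S, ∀ R', Perturb ε R R' → T.IsFlowPath R' L

/-- State of the sweep-plane minimum-removal algorithm. -/
structure SweepState (V : Type) where
  discovered : Set V
  final : V → Option ℝ
  proxies : Set V

def pendingS (st : SweepState V) (v : V) : Prop :=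
  v ∈ st.discovered ∧ st.final v = none

/-- Pending component of `v`. -/
def pendComp (T : ImpTerrain V) (st : SweepState V) (v : V) : Set V :=
  {u | Relation.ReflTransGen (fun a b => T.adj a b ∧ pendingS st a ∧ pendingS st b) v u}

/-- One step of the sweep algorithm, processing a `low` event `(v, false)` or a
`high` event `(v, true)`. -/
noncomputable def sweepStep (T : ImpTerrain V) (st : SweepState V) : V × Bool → SweepState V
  | (v, false) =>
    let st1 : SweepState V := ⟨insert v st.discovered, st.final, st.proxies⟩
    if ∃ u, T.adj v u ∧ (st.final u).isSome = true then
      ⟨st1.discovered,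
        fun w => if w ∈ T.pendComp st1 v then some (T.low v) else st.final w,
        st.proxies⟩
    else st1
  | (v, true) =>
    if (st.final v).isSome = true then st
    else
      ⟨st.discovered,
        fun w =>
          if w ∈ T.pendComp st v then some (sSup (T.low '' T.pendComp st v))
          else st.final w,
        insert v st.proxies⟩

noncomputable def sweepRun (T : ImpTerrain V) (evs : List (V × Bool)) : SweepState V :=
  evs.foldl T.sweepStep ⟨∅, fun _ => none, ∅⟩

/-- Elevation key of an event. -/
def eKey (T : ImpTerrain V) : V × Bool → ℝ
  | (v, false) => T.low v
  | (v, true) => T.high v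

/-- A valid event list: all events, each once, sorted by elevation with low
events before high events at equal elevation. -/
def ValidEventList (T : ImpTerrain V) (evs : List (V × Bool)) : Prop :=
  (∀ v : V, ∀ b : Bool, (v, b) ∈ evs) ∧ evs.Nodup ∧
    evs.Pairwise (fun e1 e2 =>
      T.eKey e1 < T.eKey e2 ∨ (T.eKey e1 = T.eKey e2 ∧ ¬(e1.2 = true ∧ e2.2 = false)))

/-- The realization `M` computed by the sweep algorithm. -/
noncomputable def sweepM (T : ImpTerrain V) (evs : List (V × Bool)) : V → ℝ :=
  fun v => ((T.sweepRun evs).final v).getD (T.high v)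

end ImpTerrain

section OverlayAux

variable {V : Type} [Fintype V] [DecidableEq V]

/-- Bounded-length chains for a relation. -/
def chainN {V : Type} (r : V → V → Prop) : ℕ → V → V → Prop
  | 0, a, b => a = b
  | n+1, a, b => a = b ∨ ∃ c, r a c ∧ chainN r n c b

lemma chainN_of_RT {V : Type} {r : V → V → Prop} {a b : V}
    (h : Relation.ReflTransGen r a b) : ∃ n, chainN r n a b := by
  induction h using Relation.ReflTransGen.head_induction_on with
  | refl => exact ⟨0, rfl⟩
  | head h' _ ih =>
    obtain ⟨n, hc⟩ := ih
    exact ⟨n+1, Or.inr ⟨_, h', hc⟩⟩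

lemma chainN_to_RT {V : Type} {r : V → V → Prop} {n : ℕ} {a b : V}
    (h : chainN r n a b) : Relation.ReflTransGen r a b := by
  induction n generalizing a with
  | zero => exact (show a = b from h) ▸ Relation.ReflTransGen.refl
  | succ n ih =>
    rcases (show a = b ∨ ∃ c, r a c ∧ chainN r n c b from h) with rfl | ⟨c, hac, hc⟩
    · exact Relation.ReflTransGen.refl
    · exact Relation.ReflTransGen.head hac (ih hc)

lemma ImpTerrain.hdist_pos (T : ImpTerrain V) {u v : V} (h : T.adj u v) :
    0 < T.hdist u v := by
  rw [ImpTerrain.hdist, dist_pos]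
  intro he
  have huv : u = v := T.posInj he
  subst huv
  exact T.adj_irrefl u h

lemma ImpTerrain.flowstep_adj (T : ImpTerrain V) (F : V → ℝ) {a b : V}
    (h : T.FlowStep F a b) : T.adj a b := by
  rcases h with ⟨P, hP, haP, hbP, hadj⟩ | ⟨_, hadj, _, _⟩ <;> exact hadj

lemma ImpTerrain.flowstep_le (T : ImpTerrain V) (F : V → ℝ) {a b : V}
    (h : T.FlowStep F a b) : F b ≤ F a := by
  rcases h with ⟨P, hP, haP, hbP, _⟩ | ⟨_, hadj, hs, _⟩
  · exact le_of_eq (hP.2.2.1 b hbP a haP)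
  · have hd := T.hdist_pos hadj
    rcases div_nonneg_iff.mp hs with ⟨h1, _⟩ | ⟨_, h2⟩
    · linarith
    · linarith

lemma ImpTerrain.localmin_subset (T : ImpTerrain V) (F : V → ℝ) {P P' : Set V}
    (hP : T.LocalMin F P) (hP' : T.LocalMin F P') {x : V}
    (hxP : x ∈ P) (hxP' : x ∈ P') : P' ⊆ P := by
  intro y hy
  have conn := hP'.2.1 x hxP' y hy
  clear hy
  induction conn with
  | refl => exact hxP
  | @tail b c h1 hstep ih =>
    obtain ⟨hadj, hbP', hcP'⟩ := hstep
    by_cases hcP : c ∈ P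
    · exact hcP
    · exfalso
      have hnb : c ∈ T.Nbhd P := ⟨hcP, b, ih, T.adj_symm _ _ hadj⟩
      have hlt := hP.2.2.2 b ih c hnb
      have he1 : F b = F c := hP'.2.2.1 b hbP' c hcP'
      linarith

lemma ImpTerrain.localmin_ws (T : ImpTerrain V) (F : V → ℝ) {P : Set V}
    (hP : T.LocalMin F P) {a b : V} (ha : a ∈ P) (hb : b ∈ P) :
    T.FlowsTo F a b := by
  have conn := hP.2.1 a ha b hb
  exact Relation.ReflTransGen.mono (r := fun a b => T.adj a b ∧ a ∈ P ∧ b ∈ P) (p := T.FlowStep F)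
    (fun x y h => Or.inl ⟨P, hP, h.2.1, h.2.2, h.1⟩) _ _ conn

/-- If water from `p` in `F` reaches `z`, `p` lies in a local minimum `P` of
`G`, `G p = F p`, and `G ≤ F` along the flow, then `z ∈ P`. -/
lemma ImpTerrain.last_mem_localmin (T : ImpTerrain V) (F G : V → ℝ) (P : Set V)
    (hP : T.LocalMin G P) {p z : V} (hpP : p ∈ P) (hpe : G p = F p)
    (hflow : Relation.ReflTransGen (T.FlowStep F) p z)
    (Hle : ∀ v, Relation.ReflTransGen (T.FlowStep F) v z → G v ≤ F v) :
    z ∈ P := by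
  have key : ∀ a (h : Relation.ReflTransGen (T.FlowStep F) a z),
      a ∈ P → G a = F a → z ∈ P := by
    intro a h
    induction h using Relation.ReflTransGen.head_induction_on with
    | refl => exact fun hz _ => hz
    | @head a' c' hstep h' ih =>
      intro ha' he'
      have hc'le : G c' ≤ F c' := Hle c' h'
      have hadj : T.adj a' c' := T.flowstep_adj F hstep
      have hle2 : F c' ≤ F a' := T.flowstep_le F hstep
      by_cases hc'P : c' ∈ P
      · have e1 : G c' = G a' := hP.2.2.1 c' hc'P a' ha'
        exact ih hc'P (by linarith)
      · exfalso
        have hnb : c' ∈ T.Nbhd P := ⟨hc'P, a', ha', T.adj_symm _ _ hadj⟩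
        have := hP.2.2.2 a' ha' c' hnb
        linarith
  exact key p hflow hpP hpe

/-- Main induction for the watershed-overlay lemma. -/
lemma ImpTerrain.overlay_main (T : ImpTerrain V)
    {ι : Type} [Fintype ι] (R : ι → V → ℝ) (hR : ∀ i, T.IsRealization (R i))
    (q : ι → V) (Rbar : V → ℝ)
    (hhigh : ∀ v, v ∉ (⋃ i, T.WS (R i) {q i}) → Rbar v = T.high v)
    (hmin : ∀ v, v ∈ (⋃ i, T.WS (R i) {q i}) →
      Rbar v = sInf ((fun i => R i v) '' {i | v ∈ T.WS (R i) {q i}})) :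
    ∀ N n (p : V) (j : ι), p ∈ T.WS (R j) {q j} → Rbar p = R j p →
      chainN (T.FlowStep (R j)) n p (q j) →
      (Finset.univ.filter (fun v => Rbar v < Rbar p)).card ≤ N →
      ∃ m, T.FlowsTo Rbar p (q m) := by
  have hWle : ∀ (v : V) (i : ι), v ∈ T.WS (R i) {q i} → Rbar v ≤ R i v := by
    intro v i hv
    have hvW : v ∈ ⋃ i, T.WS (R i) {q i} := Set.mem_iUnion.2 ⟨i, hv⟩
    rw [hmin v hvW]
    exact csInf_le (Set.Finite.bddBelow (Set.toFinite _)) ⟨i, hv, rfl⟩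
  have hWmem : ∀ v, v ∈ (⋃ i, T.WS (R i) {q i}) →
      ∃ j', v ∈ T.WS (R j') {q j'} ∧ Rbar v = R j' v := by
    intro v hv
    have h1 := hmin v hv
    obtain ⟨i0, hi0⟩ := Set.mem_iUnion.1 hv
    have hne : ((fun i => R i v) '' {i | v ∈ T.WS (R i) {q i}}).Nonempty :=
      ⟨R i0 v, i0, hi0, rfl⟩
    have hmem := hne.csInf_mem (Set.toFinite _)
    rw [← h1] at hmem
    obtain ⟨j', hj', hje⟩ := hmem
    exact ⟨j', hj', hje.symm⟩
  have hnW : ∀ (v : V) (i : ι), v ∉ (⋃ i, T.WS (R i) {q i}) → R i v ≤ Rbar v := by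
    intro v i hv
    rw [hhigh v hv]
    exact (hR i v).2
  intro N
  induction N using Nat.strong_induction_on with
  | _ N IHN =>
  intro n
  induction n with
  | zero =>
    intro p j _ _ hch _
    exact ⟨j, (show p = q j from hch) ▸ Relation.ReflTransGen.refl⟩
  | succ n IHn =>
    intro p j hpWS hpe hch hcard
    -- helper for strict-descent recursion
    have outer : ∀ w, T.FlowStep Rbar p w → w ∈ (⋃ i, T.WS (R i) {q i}) →
        Rbar w < Rbar p → ∃ m, T.FlowsTo Rbar p (q m) := by
      intro w hstep hwW hlt
      obtain ⟨j', hj'WS, hj'e⟩ := hWmem w hwW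
      obtain ⟨q', hq'mem, hRT⟩ := hj'WS
      have hq'eq : q' = q j' := hq'mem
      subst hq'eq
      obtain ⟨n', hch'⟩ := chainN_of_RT hRT
      have hsub : Finset.univ.filter (fun v => Rbar v < Rbar w) ⊂
          Finset.univ.filter (fun v => Rbar v < Rbar p) := by
        rw [Finset.ssubset_iff_of_subset]
        · exact ⟨w, by simp [hlt], by simp⟩
        · intro x hx
          simp only [Finset.mem_filter, Finset.mem_univ, true_and] at hx ⊢
          linarith
      obtain ⟨m, hm⟩ := IHN _ (lt_of_lt_of_le (Finset.card_lt_card hsub) hcard)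
        n' w j' ⟨q j', rfl, hRT⟩ hj'e hch' le_rfl
      exact ⟨m, Relation.ReflTransGen.head hstep hm⟩
    by_cases hq : p = q j
    · exact ⟨j, hq ▸ Relation.ReflTransGen.refl⟩
    rcases (show p = q j ∨ ∃ c, T.FlowStep (R j) p c ∧ chainN (T.FlowStep (R j)) n c (q j)
        from hch) with hq' | ⟨p1, hstep, hch'⟩
    · exact absurd hq' hq
    have hRT1 : Relation.ReflTransGen (T.FlowStep (R j)) p1 (q j) := chainN_to_RT hch'
    have hp1WS : p1 ∈ T.WS (R j) {q j} := ⟨q j, rfl, hRT1⟩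
    have hp1W : p1 ∈ (⋃ i, T.WS (R i) {q i}) := Set.mem_iUnion.2 ⟨j, hp1WS⟩
    have hadj1 : T.adj p p1 := T.flowstep_adj (R j) hstep
    have hd1 := T.hdist_pos hadj1
    have hle1 : R j p1 ≤ R j p := T.flowstep_le (R j) hstep
    have hle2 : Rbar p1 ≤ R j p1 := hWle p1 j hp1WS
    by_cases hloc : T.InLocalMin Rbar p
    · obtain ⟨P, hP, hpP⟩ := hloc
      have hRTp : Relation.ReflTransGen (T.FlowStep (R j)) p (q j) :=
        Relation.ReflTransGen.head hstep hRT1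
      have hqP : q j ∈ P :=
        T.last_mem_localmin (R j) Rbar P hP hpP hpe hRTp
          (fun v hv => hWle v j ⟨q j, rfl, hv⟩)
      exact ⟨j, T.localmin_ws Rbar hP hpP hqP⟩
    by_cases hflat : ∀ s, T.adj p s → Rbar p ≤ Rbar s
    · -- plateau step: follow the R j flow path
      have e1 : Rbar p1 = Rbar p := le_antisymm (by linarith) (hflat p1 hadj1)
      have e2 : Rbar p1 = R j p1 := le_antisymm hle2 (by linarith)
      have hSDN : T.SDN Rbar p p1 := by
        refine ⟨hadj1, ?_, ?_⟩
        · have : Rbar p - Rbar p1 = 0 := by linarith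
          rw [ImpTerrain.slope, this, zero_div]
        · intro r hr
          have h1 : Rbar p - Rbar r ≤ 0 := by linarith [hflat r hr]
          have h2 : Rbar p - Rbar p1 = 0 := by linarith
          rw [ImpTerrain.slope, ImpTerrain.slope, h2, zero_div]
          exact div_nonpos_iff.2 (Or.inr ⟨h1, le_of_lt (T.hdist_pos hr)⟩)
      have hFS : T.FlowStep Rbar p p1 := Or.inr ⟨hloc, hSDN⟩
      have hcard' : (Finset.univ.filter (fun v => Rbar v < Rbar p1)).card ≤ N := by
        rw [e1]; exact hcard
      obtain ⟨m, hm⟩ := IHn p1 j hp1WS e2 hch' hcard'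
      exact ⟨m, Relation.ReflTransGen.head hFS hm⟩
    · -- strict-descent step
      push_neg at hflat
      obtain ⟨r0, hr0, hr0lt⟩ := hflat
      obtain ⟨w, hwS, hwmax⟩ := (Finset.univ.filter (fun s => T.adj p s)).exists_max_image
        (T.slope Rbar p) ⟨r0, by simp [hr0]⟩
      have hadjw : T.adj p w := by simpa using hwS
      have hdw := T.hdist_pos hadjw
      have hd0 := T.hdist_pos hr0
      have hspos : 0 < T.slope Rbar p w :=
        lt_of_lt_of_le (div_pos (by linarith) hd0) (hwmax r0 (by simp [hr0]))
      have hSDNw : T.SDN Rbar p w :=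
        ⟨hadjw, le_of_lt hspos, fun r hr => hwmax r (by simp [hr])⟩
      have hwlt : Rbar w < Rbar p := by
        rcases div_pos_iff.mp hspos with ⟨h1, _⟩ | ⟨_, h2⟩
        · linarith
        · linarith
      by_cases hwW : w ∈ (⋃ i, T.WS (R i) {q i})
      · exact outer w (Or.inr ⟨hloc, hSDNw⟩) hwW hwlt
      · have hwhigh : R j w ≤ Rbar w := hnW w j hwW
        rcases hstep with ⟨P', hP', hpP', hp1P', _⟩ | ⟨hnlj, hadj1', hsj, hmaxj⟩
        · exfalso
          by_cases hwP' : w ∈ P'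
          · have : R j w = R j p := hP'.2.2.1 w hwP' p hpP'
            linarith
          · have hnb : w ∈ T.Nbhd P' := ⟨hwP', p, hpP', T.adj_symm _ _ hadjw⟩
            have := hP'.2.2.2 p hpP' w hnb
            linarith
        · have s1 : T.slope Rbar p w ≤ T.slope (R j) p w := by
            rw [ImpTerrain.slope, ImpTerrain.slope]
            exact div_le_div_of_nonneg_right (by linarith) (le_of_lt hdw)
          have s3 : T.slope (R j) p p1 ≤ T.slope Rbar p p1 := by
            rw [ImpTerrain.slope, ImpTerrain.slope]
            exact div_le_div_of_nonneg_right (by linarith) (le_of_lt hd1)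
          have s4 : T.slope (R j) p w ≤ T.slope (R j) p p1 := hmaxj w hadjw
          have s2 : T.slope Rbar p p1 ≤ T.slope Rbar p w := hwmax p1 (by simp [hadj1])
          have seq : T.slope Rbar p p1 = T.slope Rbar p w :=
            le_antisymm s2 (by linarith)
          have hSDN1 : T.SDN Rbar p p1 :=
            ⟨hadj1, by linarith, fun r hr => (hwmax r (by simp [hr])).trans (le_of_eq seq.symm)⟩
          have h1lt : Rbar p1 < Rbar p := by
            have hps : 0 < T.slope Rbar p p1 := by rw [seq]; exact hspos
            rcases div_pos_iff.mp hps with ⟨h1, _⟩ | ⟨_, h2⟩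
            · linarith
            · linarith
          exact outer p1 (Or.inr ⟨hloc, hSDN1⟩) hp1W h1lt

end OverlayAux

/-- Watershed-overlay lemma: if `Rbar` is the watershed-overlay of the
watersheds `WS(R i, q i)`, then each `WS(R i, q i)` is contained in
`WS(Rbar, Q)` where `Q = range q`. -/
theorem stmt0 {V : Type} [Fintype V] [DecidableEq V] (T : ImpTerrain V)
    (hle : ∀ v, T.low v ≤ T.high v)
    {ι : Type} [Fintype ι] (R : ι → V → ℝ) (hR : ∀ i, T.IsRealization (R i))
    (q : ι → V) (Rbar : V → ℝ)
    (hhigh : ∀ v, v ∉ (⋃ i, T.WS (R i) {q i}) → Rbar v = T.high v)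
    (hmin : ∀ v, v ∈ (⋃ i, T.WS (R i) {q i}) →
      Rbar v = sInf ((fun i => R i v) '' {i | v ∈ T.WS (R i) {q i}}))
    (i : ι) :
    T.WS (R i) {q i} ⊆ T.WS Rbar (Set.range q) := by
  intro p hp
  have hpW : p ∈ ⋃ i, T.WS (R i) {q i} := Set.mem_iUnion.2 ⟨i, hp⟩
  have h1 := hmin p hpW
  have hne : ((fun i => R i p) '' {i | p ∈ T.WS (R i) {q i}}).Nonempty :=
    ⟨R i p, i, hp, rfl⟩
  have hmem := hne.csInf_mem (Set.toFinite _)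
  rw [← h1] at hmem
  obtain ⟨j, hjWS, hje⟩ := hmem
  obtain ⟨q', hq'mem, hRT⟩ := hjWS
  have hq'eq : q' = q j := hq'mem
  subst hq'eq
  obtain ⟨n, hch⟩ := chainN_of_RT hRT
  obtain ⟨m, hm⟩ := T.overlay_main R hR q Rbar hhigh hmin
    (Finset.univ.filter (fun v => Rbar v < Rbar p)).card n p j
    ⟨q j, rfl, hRT⟩ hje.symm hch le_rfl
  exact ⟨q m, ⟨m, rfl⟩, hm⟩
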